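/- Let K_e ∈ ℝ^{n×n} be symmetric positive semidefinite, m_e ∈ ℝⁿ, τ ∈ (0,1), and λ > (1−τ)‖K_e‖. Define the τ entropy H_τ(m_e, K_e, λ) = m_eᵀ (I_n − ((1−τ)/λ) K_e)^{-1} m_e + (λ/τ) tr((I_n − ((1−τ)/λ) K_e)^{τ/(τ−1)} − I_n). Then H_τ ≥ 0, with equality if and only if m_e = 0 and K_e = 0. -/

import Mathlib

open Matrix

noncomputable def matFun {n : ℕ} (A : Matrix (Fin n) (Fin n) ℝ) (f : ℝ → ℝ) :
    Matrix (Fin n) (Fin n) ℝ :=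
  if h : A.IsHermitian then
    (h.eigenvectorUnitary : Matrix (Fin n) (Fin n) ℝ) *
      Matrix.diagonal (fun i => f (h.eigenvalues i)) *
      star (h.eigenvectorUnitary : Matrix (Fin n) (Fin n) ℝ)
  else 0

noncomputable def specNorm {n : ℕ} (A : Matrix (Fin n) (Fin n) ℝ) : ℝ :=
  if h : A.IsHermitian then ⨆ i, h.eigenvalues i else 0

private lemma conj_quad {n : ℕ} (U D : Matrix (Fin n) (Fin n) ℝ) (x : Fin n → ℝ) :
    star x ⬝ᵥ (U * D * star U) *ᵥ x
      = star (star U *ᵥ x) ⬝ᵥ D *ᵥ (star U *ᵥ x) := by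
  have h1 : star (star U *ᵥ x) = star x ᵥ* U := by
    rw [Matrix.star_mulVec, Matrix.star_eq_conjTranspose, Matrix.conjTranspose_conjTranspose]
  rw [h1, ← Matrix.mulVec_mulVec, ← Matrix.mulVec_mulVec, Matrix.dotProduct_mulVec]

/-- The τ entropy
`H_τ(m_e, K_e, λ) = m_eᵀ (I − ((1−τ)/λ)K_e)⁻¹ m_e + (λ/τ) tr((I − ((1−τ)/λ)K_e)^{τ/(τ−1)} − I)`
is nonnegative for `λ > (1−τ)‖K_e‖`, and vanishes iff `m_e = 0` and `K_e = 0`. -/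
theorem tau_entropy_nonneg_eq_zero_iff {n : ℕ} (Ke : Matrix (Fin n) (Fin n) ℝ)
    (hKe : Ke.PosSemidef) (me : Fin n → ℝ) (τ lam : ℝ)
    (hτ0 : 0 < τ) (hτ1 : τ < 1) (hlam : (1 - τ) * specNorm Ke < lam) :
    0 ≤ me ⬝ᵥ (((1 : Matrix (Fin n) (Fin n) ℝ) - ((1 - τ) / lam) • Ke)⁻¹ *ᵥ me) +
        (lam / τ) * (matFun ((1 : Matrix (Fin n) (Fin n) ℝ) - ((1 - τ) / lam) • Ke)
            (fun x => x ^ (τ / (τ - 1))) - 1).trace ∧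
    (me ⬝ᵥ (((1 : Matrix (Fin n) (Fin n) ℝ) - ((1 - τ) / lam) • Ke)⁻¹ *ᵥ me) +
        (lam / τ) * (matFun ((1 : Matrix (Fin n) (Fin n) ℝ) - ((1 - τ) / lam) • Ke)
            (fun x => x ^ (τ / (τ - 1))) - 1).trace = 0 ↔ me = 0 ∧ Ke = 0) := by
  have hK : Ke.IsHermitian := hKe.1
  set c : ℝ := (1 - τ) / lam with hc
  -- basic positivity facts
  have hspec0 : 0 ≤ specNorm Ke := by
    rw [specNorm, dif_pos hK]
    rcases isEmpty_or_nonempty (Fin n) with h | h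
    · rw [Real.iSup_of_isEmpty]
    · obtain ⟨i⟩ := h
      exact le_trans (hKe.eigenvalues_nonneg i)
        (le_ciSup (Set.finite_range _).bddAbove i)
  have hlam0 : 0 < lam := lt_of_le_of_lt (mul_nonneg (by linarith) hspec0) hlam
  have hc0 : 0 < c := div_pos (by linarith) hlam0
  set A : Matrix (Fin n) (Fin n) ℝ := 1 - c • Ke with hAdef
  -- c • Ke is positive semidefinite
  have hcK : (c • Ke).PosSemidef := by
    refine Matrix.PosSemidef.of_dotProduct_mulVec_nonneg ?_ fun x => ?_
    · show (c • Ke)ᴴ = c • Ke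
      rw [Matrix.conjTranspose_smul, star_trivial, hK.eq]
    · rw [Matrix.smul_mulVec, dotProduct_smul, smul_eq_mul]
      exact mul_nonneg hc0.le (hKe.dotProduct_mulVec_nonneg x)
  -- eigenvalues of Ke are < 1/c
  have hμ : ∀ i, c * hK.eigenvalues i < 1 := by
    intro i
    have h1 : hK.eigenvalues i ≤ specNorm Ke := by
      rw [specNorm, dif_pos hK]
      exact le_ciSup (Set.finite_range _).bddAbove i
    calc c * hK.eigenvalues i ≤ c * specNorm Ke :=
          mul_le_mul_of_nonneg_left h1 hc0.le
      _ < 1 := by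
          rw [hc, div_mul_eq_mul_div, div_lt_one hlam0]; exact hlam
  -- spectral representation of A
  set U : Matrix (Fin n) (Fin n) ℝ := (hK.eigenvectorUnitary : Matrix (Fin n) (Fin n) ℝ)
    with hUdef
  have hUstar : U * star U = 1 := Matrix.mem_unitaryGroup_iff.mp hK.eigenvectorUnitary.2
  have hstarU : star U * U = 1 := Matrix.mem_unitaryGroup_iff'.mp hK.eigenvectorUnitary.2
  have hKspec : Ke = U * Matrix.diagonal hK.eigenvalues * star U := by
    have := hK.spectral_theorem
    rwa [RCLike.ofReal_real_eq_id, Function.id_comp] at this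
  have hAU : A = U * Matrix.diagonal (fun i => 1 - c * hK.eigenvalues i) * star U := by
    have hd : Matrix.diagonal (fun i => 1 - c * hK.eigenvalues i)
        = 1 - c • Matrix.diagonal hK.eigenvalues := by
      ext i j
      rcases eq_or_ne i j with rfl | hij
      · simp
      · simp [Matrix.diagonal_apply_ne _ hij, Matrix.one_apply_ne hij]
    rw [hd, Matrix.mul_sub, Matrix.sub_mul, mul_one, hUstar, Matrix.mul_smul,
      Matrix.smul_mul, ← hKspec]
  -- A is positive definite
  have hApd : A.PosDef := by
    refine Matrix.PosDef.of_dotProduct_mulVec_pos ?_ fun x hx => ?_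
    · exact Matrix.isHermitian_one.sub hcK.1
    · rw [hAU, conj_quad]
      have hy : star U *ᵥ x ≠ 0 := by
        intro h
        apply hx
        have : U *ᵥ (star U *ᵥ x) = x := by
          rw [Matrix.mulVec_mulVec, hUstar, Matrix.one_mulVec]
        rw [← this, h, Matrix.mulVec_zero]
      exact (Matrix.PosDef.diagonal fun i => sub_pos.mpr (hμ i)).dotProduct_mulVec_pos hy
  have hA : A.IsHermitian := hApd.1
  -- bounds on eigenvalues of A
  have hν0 : ∀ j, 0 < hA.eigenvalues j := fun j => hApd.eigenvalues_pos j
  have hν1 : ∀ j, hA.eigenvalues j ≤ 1 := by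
    intro j
    have hv := hA.mulVec_eigenvectorBasis j
    set v : Fin n → ℝ := ⇑(hA.eigenvectorBasis j) with hvdef
    have hv0 : v ≠ 0 := fun h =>
      (hA.eigenvectorBasis.orthonormal.ne_zero j) (by ext i; exact congrFun h i)
    have hvv : 0 < v ⬝ᵥ v := by
      have := Matrix.dotProduct_star_self_pos_iff (v := v) |>.mpr hv0
      simpa using this
    have h2 : 0 ≤ star v ⬝ᵥ (c • Ke) *ᵥ v := hcK.dotProduct_mulVec_nonneg v
    have h3 : (c • Ke) *ᵥ v = v - hA.eigenvalues j • v := by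
      have : c • Ke = 1 - A := (sub_sub_cancel 1 (c • Ke)).symm
      rw [this, Matrix.sub_mulVec, Matrix.one_mulVec, hv]
    rw [h3, star_trivial, dotProduct_sub, dotProduct_smul, smul_eq_mul] at h2
    nlinarith
  -- trace formula
  set p : ℝ := τ / (τ - 1) with hp
  have hpneg : p < 0 := div_neg_of_pos_of_neg hτ0 (by linarith)
  have htr : (matFun A (fun x => x ^ p) - 1).trace
      = ∑ j, ((hA.eigenvalues j) ^ p - 1) := by
    rw [Matrix.trace_sub, Matrix.trace_one, matFun, dif_pos hA,
      Matrix.trace_mul_cycle]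
    rw [show star (hA.eigenvectorUnitary : Matrix (Fin n) (Fin n) ℝ) *
        (hA.eigenvectorUnitary : Matrix (Fin n) (Fin n) ℝ) = 1 from
      Matrix.mem_unitaryGroup_iff'.mp hA.eigenvectorUnitary.2, Matrix.one_mul,
      Matrix.trace_diagonal, Finset.sum_sub_distrib, Finset.sum_const]
    simp
  have hterm : ∀ j, (0:ℝ) ≤ (hA.eigenvalues j) ^ p - 1 := by
    intro j
    have := Real.one_le_rpow_of_pos_of_le_one_of_nonpos (hν0 j) (hν1 j) hpneg.le
    linarith
  have hsum0 : 0 ≤ ∑ j, ((hA.eigenvalues j) ^ p - 1) :=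
    Finset.sum_nonneg fun j _ => hterm j
  have hlτ : 0 < lam / τ := div_pos hlam0 hτ0
  -- the quadratic term
  have hAinv : A⁻¹.PosDef := hApd.inv
  have hsme : star me = me := star_trivial me
  have hQ0 : 0 ≤ me ⬝ᵥ (A⁻¹ *ᵥ me) := by
    have := hAinv.posSemidef.dotProduct_mulVec_nonneg me
    rwa [hsme] at this
  have hQiff : me ⬝ᵥ (A⁻¹ *ᵥ me) = 0 ↔ me = 0 := by
    constructor
    · intro h
      by_contra hme
      have := hAinv.dotProduct_mulVec_pos hme
      rw [hsme, h] at this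
      exact lt_irrefl 0 this
    · intro h; rw [h, zero_dotProduct]
  -- the trace term
  have hT0 : 0 ≤ (lam / τ) * (matFun A (fun x => x ^ p) - 1).trace := by
    rw [htr]; exact mul_nonneg hlτ.le hsum0
  have hTiff : (lam / τ) * (matFun A (fun x => x ^ p) - 1).trace = 0 ↔ Ke = 0 := by
    rw [htr]
    constructor
    · intro h
      have hsum : ∑ j, ((hA.eigenvalues j) ^ p - 1) = 0 :=
        (mul_eq_zero.mp h).resolve_left hlτ.ne'
      have hall : ∀ j, hA.eigenvalues j = 1 := by
        intro j
        have hj := (Finset.sum_eq_zero_iff_of_nonneg fun j _ => hterm j).mp hsum j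
          (Finset.mem_univ j)
        by_contra hne
        have hlt : hA.eigenvalues j < 1 := lt_of_le_of_ne (hν1 j) hne
        have := Real.one_lt_rpow_of_pos_of_lt_one_of_neg (hν0 j) hlt hpneg
        linarith
      -- A = 1, hence Ke = 0
      have hA1 : A = 1 := by
        have hsp := hA.spectral_theorem
        rw [RCLike.ofReal_real_eq_id, Function.id_comp] at hsp
        have : Matrix.diagonal hA.eigenvalues = 1 := by
          rw [show hA.eigenvalues = fun _ => (1:ℝ) from funext hall, Matrix.diagonal_one]
        rw [hsp, this, Unitary.conjStarAlgAut_apply, Matrix.mul_one,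
          Matrix.mem_unitaryGroup_iff.mp hA.eigenvectorUnitary.2]
      have : c • Ke = 0 := by
        have := hA1
        rwa [hAdef, sub_eq_self] at this
      rcases smul_eq_zero.mp this with h | h
      · exact absurd h hc0.ne'
      · exact h
    · intro h
      have hA1 : A = 1 := by rw [hAdef, h, smul_zero, sub_zero]
      have hall : ∀ j, hA.eigenvalues j = 1 := by
        intro j
        have hv := hA.mulVec_eigenvectorBasis j
        set v : Fin n → ℝ := ⇑(hA.eigenvectorBasis j) with hvdef
        have hveq : v = hA.eigenvalues j • v := by
          calc v = (1 : Matrix (Fin n) (Fin n) ℝ) *ᵥ v := (Matrix.one_mulVec v).symm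
            _ = A *ᵥ v := congrArg (· *ᵥ v) hA1.symm
            _ = hA.eigenvalues j • v := hv
        have hv0 : v ≠ 0 := fun h =>
          (hA.eigenvectorBasis.orthonormal.ne_zero j) (by ext i; exact congrFun h i)
        obtain ⟨k, hk⟩ := Function.ne_iff.mp hv0
        have := congrFun hveq k
        simp only [Pi.smul_apply, smul_eq_mul] at this
        have : (hA.eigenvalues j - 1) * v k = 0 := by linarith [this]
        rcases mul_eq_zero.mp this with h' | h'
        · linarith
        · exact absurd h' hk
      have : ∑ j, ((hA.eigenvalues j) ^ p - 1) = 0 := by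
        apply Finset.sum_eq_zero
        intro j _
        rw [hall j, Real.one_rpow]
        ring
      rw [this, mul_zero]
  refine ⟨by linarith, ?_, ?_⟩
  · intro h
    have hQ : me ⬝ᵥ (A⁻¹ *ᵥ me) = 0 := by linarith
    have hT : (lam / τ) * (matFun A (fun x => x ^ p) - 1).trace = 0 := by linarith
    exact ⟨hQiff.mp hQ, hTiff.mp hT⟩
  · rintro ⟨h1, h2⟩
    rw [hQiff.mpr h1, hTiff.mpr h2, add_zero]
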